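/- (Exponential moment bound, i.i.d. product version.) Let (X,Y) ∈ ℝ^{2k} × ℝ have joint density f_{XY} satisfying L(t) = ∫ f_{Y|X}(y|x)^t f_X(x) dμ(x,y) < ∞ for all t > 0 and K₁ < ∞, where K₁ = max{ sup_{t ∈ (0,1]} t²·(t L(t))'' , sup_{t > 1} t²·(Q̄^{1−t} L(t))'' } for a fixed Q̄ > 0. Let (𝐗,𝐘) ∈ ℝ^{2kn} × ℝⁿ be i.i.d. with n copies of f_{XY}, and set h̃(𝐘|𝐗) = −log f_{𝐘|𝐗}(𝐘|𝐗) and h(𝐘|𝐗) = E[h̃(𝐘|𝐗)]. Then for all μ ∈ ℝ, E[exp(μ(h̃(𝐘|𝐗) − h(𝐘|𝐗)))] ≤ exp(n(K₁+1)·r(−μ)). -/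

import Mathlib

open MeasureTheory ProbabilityTheory Filter Topology Real
open scoped ENNReal NNReal

noncomputable section

namespace CondInfo

/-- Marginal density of `X` obtained from the joint density `f` of `(X, Y)`. -/
def margX {k : ℕ} (f : ((Fin (2 * k) → ℝ) × ℝ) → ℝ) (x : Fin (2 * k) → ℝ) : ℝ :=
  ∫ y, f (x, y)

/-- Conditional density `f_{Y|X}(y|x) = f_{XY}(x,y) / f_X(x)`. -/
def condD {k : ℕ} (f : ((Fin (2 * k) → ℝ) × ℝ) → ℝ) (p : (Fin (2 * k) → ℝ) × ℝ) : ℝ :=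
  f p / margX f p.1

/-- `L(t) = ∫ f_{Y|X}(y|x)^t f_X(x) dμ(x,y)`. -/
def Lmom {k : ℕ} (f : ((Fin (2 * k) → ℝ) × ℝ) → ℝ) (t : ℝ) : ℝ :=
  (∫⁻ p, ENNReal.ofReal (condD f p ^ t * margX f p.1)).toReal

/-- The conditional differential entropy `h(Y|X) = −∫ f_{XY} log f_{Y|X}`. -/
def hYX {k : ℕ} (f : ((Fin (2 * k) → ℝ) × ℝ) → ℝ) : ℝ :=
  -∫ p, f p * Real.log (condD f p)

/-- The set whose supremum is the first term in the definition of `K₁`. -/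
def K1setA {k : ℕ} (f : ((Fin (2 * k) → ℝ) × ℝ) → ℝ) : Set ℝ :=
  (fun t => t ^ 2 * iteratedDeriv 2 (fun u => u * Lmom f u) t) '' Set.Ioc (0 : ℝ) 1

/-- The set whose supremum is the second term in the definition of `K₁`. -/
def K1setB {k : ℕ} (f : ((Fin (2 * k) → ℝ) × ℝ) → ℝ) (Q : ℝ) : Set ℝ :=
  (fun t => t ^ 2 * iteratedDeriv 2 (fun u => Q ^ (1 - u) * Lmom f u) t) '' Set.Ioi (1 : ℝ)

/-- `K₁ = max{ sup_{t∈(0,1]} t² (t L(t))'' , sup_{t>1} t² (Q̄^{1−t} L(t))'' }`. -/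
def K1 {k : ℕ} (f : ((Fin (2 * k) → ℝ) × ℝ) → ℝ) (Q : ℝ) : ℝ :=
  max (sSup (K1setA f)) (sSup (K1setB f Q))

/-- The rate function `r(u) = u − log(1+u)` for `u > −1`, `+∞` otherwise
(valued in `ℝ≥0∞`). -/
def rfun (u : ℝ) : ℝ≥0∞ :=
  if -1 < u then ENNReal.ofReal (u - Real.log (1 + u)) else ⊤

/-- `exp(c · e)` for `e ∈ ℝ≥0∞` (equal to `⊤` when `e = ⊤`). -/
def expRate (c : ℝ) (e : ℝ≥0∞) : ℝ≥0∞ :=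
  if e = ⊤ then ⊤ else ENNReal.ofReal (Real.exp (c * e.toReal))

end CondInfo


open CondInfo

open MeasureTheory Filter Topology Real Set

lemma abs_le_exp_aux (δ u : ℝ) (hδ : 0 < δ) :
    |u| ≤ δ⁻¹ * (Real.exp (δ * u) + Real.exp (-(δ * u))) := by
  have h0 : δ * |u| ≤ Real.exp (δ * |u|) := by
    have := Real.add_one_le_exp (δ * |u|); linarith
  have h1 : Real.exp (δ * |u|) ≤ Real.exp (δ * u) + Real.exp (-(δ * u)) := by
    rcases abs_cases u with ⟨h, _⟩ | ⟨h, _⟩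
    · rw [h]; nlinarith [Real.exp_pos (-(δ * u))]
    · rw [h, mul_neg]; nlinarith [Real.exp_pos (δ * u)]
  calc |u| = δ⁻¹ * (δ * |u|) := by field_simp
  _ ≤ δ⁻¹ * (Real.exp (δ * u) + Real.exp (-(δ * u))) :=
      mul_le_mul_of_nonneg_left (h0.trans h1) (by positivity)

lemma exp_interval_bound (u a b s : ℝ) (ha : a ≤ s) (hb : s ≤ b) :
    Real.exp ((1 - s) * u) ≤ Real.exp ((1 - a) * u) + Real.exp ((1 - b) * u) := by
  rcases le_total 0 u with h | h
  · have : (1 - s) * u ≤ (1 - a) * u := by nlinarith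
    nlinarith [Real.exp_le_exp.2 this, Real.exp_pos ((1 - b) * u)]
  · have : (1 - s) * u ≤ (1 - b) * u := by nlinarith
    nlinarith [Real.exp_le_exp.2 this, Real.exp_pos ((1 - a) * u)]

/-- Key comparison lemma, left branch: from `g'' ≤ K/s²` on `(0,1]`. -/
lemma taylor_bound_left (g g' g'' : ℝ → ℝ) (K : ℝ)
    (hd1 : ∀ s ∈ Ioi (0:ℝ), HasDerivAt g (g' s) s)
    (hd2 : ∀ s ∈ Ioi (0:ℝ), HasDerivAt g' (g'' s) s)
    (hb : ∀ s ∈ Ioc (0:ℝ) 1, g'' s ≤ K / s ^ 2)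
    (t : ℝ) (ht : 0 < t) (ht1 : t ≤ 1) :
    g t ≤ g 1 + (t - 1) * g' 1 + K * (t - 1 - Real.log t) := by
  rcases eq_or_lt_of_le ht1 with rfl | htlt
  · simp
  set D : ℝ → ℝ := fun s => g' s - g' 1 - K * (1 - s⁻¹) with hD
  have hDderiv : ∀ s ∈ Ioi (0:ℝ), HasDerivAt D (g'' s - K / s ^ 2) s := by
    intro s hs
    have h1 : HasDerivAt (fun s : ℝ => K * (1 - s⁻¹)) (K * (s ^ 2)⁻¹) s := by
      have := ((hasDerivAt_inv (ne_of_gt hs)).const_sub (1:ℝ)).const_mul K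
      refine this.congr_deriv ?_
      rw [neg_neg]
    have := (hd2 s hs).sub_const (g' 1) |>.sub h1
    exact this.congr_deriv (by ring)
  have hDcont : ContinuousOn D (Icc t 1) := fun s hs =>
    ((hDderiv s (lt_of_lt_of_le ht hs.1)).continuousAt).continuousWithinAt
  have hDanti : AntitoneOn D (Icc t 1) := by
    apply antitoneOn_of_deriv_nonpos (convex_Icc t 1) hDcont
    · intro s hs
      rw [interior_Icc] at hs
      exact ((hDderiv s (ht.trans hs.1)).differentiableAt).differentiableWithinAt
    · intro s hs
      rw [interior_Icc] at hs
      rw [(hDderiv s (ht.trans hs.1)).deriv]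
      have := hb s ⟨ht.trans hs.1, hs.2.le⟩
      linarith
  have hD1 : D 1 = 0 := by simp [hD]
  have hDnonneg : ∀ s ∈ Icc t 1, 0 ≤ D s := by
    intro s hs
    have := hDanti hs (right_mem_Icc.2 ht1) hs.2
    rw [hD1] at this; exact this
  set E : ℝ → ℝ := fun s => g s - (s - 1) * g' 1 - K * (s - 1 - Real.log s) with hE
  have hEderiv : ∀ s ∈ Ioi (0:ℝ), HasDerivAt E (D s) s := by
    intro s hs
    have h1 : HasDerivAt (fun s : ℝ => (s - 1) * g' 1) (g' 1) s := by
      have := ((hasDerivAt_id s).sub_const (1:ℝ)).mul_const (g' 1)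
      refine this.congr_deriv ?_; ring
    have h2 : HasDerivAt (fun s : ℝ => K * (s - 1 - Real.log s)) (K * (1 - s⁻¹)) s := by
      have := (((hasDerivAt_id s).sub_const (1:ℝ)).sub (Real.hasDerivAt_log (ne_of_gt hs))).const_mul K
      exact this
    have := ((hd1 s hs).sub h1).sub h2
    exact this
  have hEmono : MonotoneOn E (Icc t 1) := by
    apply monotoneOn_of_deriv_nonneg (convex_Icc t 1)
    · exact fun s hs => ((hEderiv s (lt_of_lt_of_le ht hs.1)).continuousAt).continuousWithinAt
    · intro s hs
      rw [interior_Icc] at hs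
      exact ((hEderiv s (ht.trans hs.1)).differentiableAt).differentiableWithinAt
    · intro s hs
      rw [interior_Icc] at hs
      rw [(hEderiv s (ht.trans hs.1)).deriv]
      exact hDnonneg s ⟨hs.1.le, hs.2.le⟩
  have := hEmono (left_mem_Icc.2 ht1) (right_mem_Icc.2 ht1) ht1
  simp only [hE, Real.log_one] at this
  linarith

/-- Key comparison lemma, right branch: from `g'' ≤ K/s²` on `(1,∞)`. -/
lemma taylor_bound_right (g g' g'' : ℝ → ℝ) (K : ℝ)
    (hd1 : ∀ s ∈ Ioi (0:ℝ), HasDerivAt g (g' s) s)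
    (hd2 : ∀ s ∈ Ioi (0:ℝ), HasDerivAt g' (g'' s) s)
    (hb : ∀ s ∈ Ioi (1:ℝ), g'' s ≤ K / s ^ 2)
    (t : ℝ) (ht : 1 ≤ t) :
    g t ≤ g 1 + (t - 1) * g' 1 + K * (t - 1 - Real.log t) := by
  rcases eq_or_lt_of_le ht with rfl | htlt
  · simp
  set D : ℝ → ℝ := fun s => g' s - g' 1 - K * (1 - s⁻¹) with hD
  have hDderiv : ∀ s ∈ Ioi (0:ℝ), HasDerivAt D (g'' s - K / s ^ 2) s := by
    intro s hs
    have h1 : HasDerivAt (fun s : ℝ => K * (1 - s⁻¹)) (K * (s ^ 2)⁻¹) s := by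
      have := ((hasDerivAt_inv (ne_of_gt hs)).const_sub (1:ℝ)).const_mul K
      refine this.congr_deriv ?_
      rw [neg_neg]
    have := (hd2 s hs).sub_const (g' 1) |>.sub h1
    exact this.congr_deriv (by ring)
  have hpos : ∀ s ∈ Icc (1:ℝ) t, (0:ℝ) < s := fun s hs => lt_of_lt_of_le one_pos hs.1
  have hDcont : ContinuousOn D (Icc 1 t) := fun s hs =>
    ((hDderiv s (hpos s hs)).continuousAt).continuousWithinAt
  have hDanti : AntitoneOn D (Icc 1 t) := by
    apply antitoneOn_of_deriv_nonpos (convex_Icc 1 t) hDcont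
    · intro s hs
      rw [interior_Icc] at hs
      exact ((hDderiv s (one_pos.trans hs.1)).differentiableAt).differentiableWithinAt
    · intro s hs
      rw [interior_Icc] at hs
      rw [(hDderiv s (one_pos.trans hs.1)).deriv]
      have := hb s hs.1
      linarith
  have hD1 : D 1 = 0 := by simp [hD]
  have hDnonpos : ∀ s ∈ Icc (1:ℝ) t, D s ≤ 0 := by
    intro s hs
    have := hDanti (left_mem_Icc.2 ht) hs hs.1
    rw [hD1] at this; exact this
  set E : ℝ → ℝ := fun s => g s - (s - 1) * g' 1 - K * (s - 1 - Real.log s) with hE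
  have hEderiv : ∀ s ∈ Ioi (0:ℝ), HasDerivAt E (D s) s := by
    intro s hs
    have h1 : HasDerivAt (fun s : ℝ => (s - 1) * g' 1) (g' 1) s := by
      have := ((hasDerivAt_id s).sub_const (1:ℝ)).mul_const (g' 1)
      refine this.congr_deriv ?_; ring
    have h2 : HasDerivAt (fun s : ℝ => K * (s - 1 - Real.log s)) (K * (1 - s⁻¹)) s := by
      have := (((hasDerivAt_id s).sub_const (1:ℝ)).sub (Real.hasDerivAt_log (ne_of_gt hs))).const_mul K
      exact this
    have := ((hd1 s hs).sub h1).sub h2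
    exact this
  have hEanti : AntitoneOn E (Icc 1 t) := by
    apply antitoneOn_of_deriv_nonpos (convex_Icc 1 t)
    · exact fun s hs => ((hEderiv s (hpos s hs)).continuousAt).continuousWithinAt
    · intro s hs
      rw [interior_Icc] at hs
      exact ((hEderiv s (one_pos.trans hs.1)).differentiableAt).differentiableWithinAt
    · intro s hs
      rw [interior_Icc] at hs
      rw [(hEderiv s (one_pos.trans hs.1)).deriv]
      exact hDnonpos s ⟨hs.1.le, hs.2.le⟩
  have := hEanti (left_mem_Icc.2 ht) (right_mem_Icc.2 ht) ht
  simp only [hE, Real.log_one] at this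
  linarith

open MeasureTheory Filter Topology Real Set
noncomputable section

section AbstractMGF
variable {α : Type*} [MeasurableSpace α] (ν : Measure α) (ℓ : α → ℝ)

def LF (t : ℝ) : ℝ := ∫ x, Real.exp ((1 - t) * ℓ x) ∂ν
def LD1 (t : ℝ) : ℝ := ∫ x, -ℓ x * Real.exp ((1 - t) * ℓ x) ∂ν
def LD2 (t : ℝ) : ℝ := ∫ x, ℓ x ^ 2 * Real.exp ((1 - t) * ℓ x) ∂ν

variable {ν ℓ}
variable (hl : Measurable ℓ)
  (hA : ∀ c : ℝ, c < 1 → Integrable (fun x => Real.exp (c * ℓ x)) ν)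

section
include hl hA

lemma intAbs1 (c : ℝ) (hc : c < 1) :
    Integrable (fun x => |ℓ x| * Real.exp (c * ℓ x)) ν := by
  set δ := (1 - c) / 2 with hδdef
  have hδ : 0 < δ := by simp only [hδdef]; linarith
  have hint : Integrable (fun x => δ⁻¹ * (Real.exp ((c + δ) * ℓ x) + Real.exp ((c - δ) * ℓ x))) ν :=
    (((hA (c + δ) (by simp only [hδdef]; linarith)).add (hA (c - δ) (by linarith)))).const_mul _
  refine hint.mono ((hl.abs.mul ((hl.const_mul c).exp)).aestronglyMeasurable) (ae_of_all _ fun x => ?_)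
  have h1 : |ℓ x| ≤ δ⁻¹ * (Real.exp (δ * ℓ x) + Real.exp (-(δ * ℓ x))) := abs_le_exp_aux δ _ hδ
  have he : (0:ℝ) < Real.exp (c * ℓ x) := Real.exp_pos _
  rw [Real.norm_eq_abs, Real.norm_eq_abs, abs_mul, abs_abs, abs_of_pos he]
  calc |ℓ x| * Real.exp (c * ℓ x)
      ≤ δ⁻¹ * (Real.exp (δ * ℓ x) + Real.exp (-(δ * ℓ x))) * Real.exp (c * ℓ x) :=
        mul_le_mul_of_nonneg_right h1 he.le
    _ = δ⁻¹ * (Real.exp ((c + δ) * ℓ x) + Real.exp ((c - δ) * ℓ x)) := by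
        rw [mul_assoc, add_mul, ← Real.exp_add, ← Real.exp_add]; ring_nf
    _ ≤ |δ⁻¹ * (Real.exp ((c + δ) * ℓ x) + Real.exp ((c - δ) * ℓ x))| := le_abs_self _

lemma intNeg1 (c : ℝ) (hc : c < 1) :
    Integrable (fun x => -ℓ x * Real.exp (c * ℓ x)) ν := by
  refine (intAbs1 hl hA c hc).mono ((hl.neg.mul ((hl.const_mul c).exp)).aestronglyMeasurable)
    (ae_of_all _ fun x => ?_)
  have he : (0:ℝ) < Real.exp (c * ℓ x) := Real.exp_pos _
  rw [Real.norm_eq_abs, Real.norm_eq_abs, abs_mul, abs_mul, abs_neg, abs_abs]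

lemma intAbs2 (c : ℝ) (hc : c < 1) :
    Integrable (fun x => ℓ x ^ 2 * Real.exp (c * ℓ x)) ν := by
  set δ := (1 - c) / 4 with hδdef
  have hδ : 0 < δ := by simp only [hδdef]; linarith
  have hint : Integrable (fun x => δ⁻¹ * δ⁻¹ *
      (Real.exp ((c + 2*δ) * ℓ x) + Real.exp ((c - 2*δ) * ℓ x) + 2 * Real.exp (c * ℓ x))) ν := by
    refine Integrable.const_mul ?_ _
    exact ((hA (c + 2*δ) (by simp only [hδdef]; linarith)).add (hA (c - 2*δ) (by linarith))).add
      ((hA c hc).const_mul 2)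
  refine hint.mono (((hl.pow_const 2).mul ((hl.const_mul c).exp)).aestronglyMeasurable)
    (ae_of_all _ fun x => ?_)
  have h1 : |ℓ x| ≤ δ⁻¹ * (Real.exp (δ * ℓ x) + Real.exp (-(δ * ℓ x))) := abs_le_exp_aux δ _ hδ
  have he : (0:ℝ) < Real.exp (c * ℓ x) := Real.exp_pos _
  have hsq : ℓ x ^ 2 ≤ (δ⁻¹ * (Real.exp (δ * ℓ x) + Real.exp (-(δ * ℓ x)))) ^ 2 := by
    rw [← sq_abs (ℓ x)]
    exact pow_le_pow_left₀ (abs_nonneg _) h1 2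
  rw [Real.norm_eq_abs, Real.norm_eq_abs, abs_mul, abs_of_pos he, abs_of_nonneg (sq_nonneg _)]
  have key : (δ⁻¹ * (Real.exp (δ * ℓ x) + Real.exp (-(δ * ℓ x)))) ^ 2 * Real.exp (c * ℓ x)
      = δ⁻¹ * δ⁻¹ * (Real.exp ((c + 2*δ) * ℓ x) + Real.exp ((c - 2*δ) * ℓ x) + 2 * Real.exp (c * ℓ x)) := by
    have e1 : Real.exp (δ * ℓ x) * Real.exp (δ * ℓ x) * Real.exp (c * ℓ x) = Real.exp ((c + 2*δ) * ℓ x) := by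
      rw [← Real.exp_add, ← Real.exp_add]; ring_nf
    have e2 : Real.exp (-(δ * ℓ x)) * Real.exp (-(δ * ℓ x)) * Real.exp (c * ℓ x) = Real.exp ((c - 2*δ) * ℓ x) := by
      rw [← Real.exp_add, ← Real.exp_add]; ring_nf
    have e3 : Real.exp (δ * ℓ x) * Real.exp (-(δ * ℓ x)) = 1 := by
      rw [← Real.exp_add]; simp
    linear_combination (δ⁻¹*δ⁻¹) * e1 + (δ⁻¹*δ⁻¹) * e2 + (2*δ⁻¹*δ⁻¹*Real.exp (c * ℓ x)) * e3
  calc ℓ x ^ 2 * Real.exp (c * ℓ x)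
      ≤ (δ⁻¹ * (Real.exp (δ * ℓ x) + Real.exp (-(δ * ℓ x)))) ^ 2 * Real.exp (c * ℓ x) :=
        mul_le_mul_of_nonneg_right hsq he.le
    _ = δ⁻¹ * δ⁻¹ * (Real.exp ((c + 2*δ) * ℓ x) + Real.exp ((c - 2*δ) * ℓ x) + 2 * Real.exp (c * ℓ x)) := key
    _ ≤ |δ⁻¹ * δ⁻¹ * (Real.exp ((c + 2*δ) * ℓ x) + Real.exp ((c - 2*δ) * ℓ x) + 2 * Real.exp (c * ℓ x))| := le_abs_self _

lemma LF_hasDeriv : ∀ t ∈ Ioi (0:ℝ), HasDerivAt (LF ν ℓ) (LD1 ν ℓ t) t := by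
  intro t ht
  rw [mem_Ioi] at ht
  have hεpos : (0:ℝ) < t / 2 := div_pos ht two_pos
  have key := hasDerivAt_integral_of_dominated_loc_of_deriv_le (μ := ν) (𝕜 := ℝ)
    (F := fun s x => Real.exp ((1 - s) * ℓ x))
    (F' := fun s x => -ℓ x * Real.exp ((1 - s) * ℓ x))
    (x₀ := t)
    (bound := fun x => |ℓ x| * (Real.exp ((1 - t/2) * ℓ x) + Real.exp ((1 - 3*t/2) * ℓ x)))
    (Metric.ball_mem_nhds t hεpos)
    (Eventually.of_forall fun s => ((hl.const_mul (1 - s)).exp.aestronglyMeasurable))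
    (hA (1 - t) (by linarith))
    ((hl.neg.mul ((hl.const_mul (1 - t)).exp)).aestronglyMeasurable)
    ?_ ?_ ?_
  · exact key.2
  · refine ae_of_all _ fun x s hs => ?_
    rw [Metric.mem_ball, Real.dist_eq, abs_lt] at hs
    rw [norm_mul, norm_neg, Real.norm_eq_abs, Real.norm_eq_abs, abs_of_pos (Real.exp_pos _)]
    exact mul_le_mul_of_nonneg_left
      (exp_interval_bound (ℓ x) (t/2) (3*t/2) s (by linarith [hs.1]) (by linarith [hs.2]))
      (abs_nonneg _)
  · refine ((intAbs1 hl hA (1 - t/2) (by linarith)).add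
      (intAbs1 hl hA (1 - 3*t/2) (by linarith))).congr
      (ae_of_all _ fun x => by simp only [Pi.add_apply]; rw [mul_add])
  · refine ae_of_all _ fun x s hs => ?_
    have h1 : HasDerivAt (fun s : ℝ => (1 - s) * ℓ x) (-ℓ x) s := by
      have := ((hasDerivAt_id s).const_sub (1:ℝ)).mul_const (ℓ x)
      refine this.congr_deriv ?_; ring
    have := h1.exp
    refine this.congr_deriv ?_; ring

lemma LD1_hasDeriv : ∀ t ∈ Ioi (0:ℝ), HasDerivAt (LD1 ν ℓ) (LD2 ν ℓ t) t := by
  intro t ht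
  rw [mem_Ioi] at ht
  have hεpos : (0:ℝ) < t / 2 := div_pos ht two_pos
  have key := hasDerivAt_integral_of_dominated_loc_of_deriv_le (μ := ν) (𝕜 := ℝ)
    (F := fun s x => -ℓ x * Real.exp ((1 - s) * ℓ x))
    (F' := fun s x => ℓ x ^ 2 * Real.exp ((1 - s) * ℓ x))
    (x₀ := t)
    (bound := fun x => ℓ x ^ 2 * (Real.exp ((1 - t/2) * ℓ x) + Real.exp ((1 - 3*t/2) * ℓ x)))
    (Metric.ball_mem_nhds t hεpos)
    (Eventually.of_forall fun s => (hl.neg.mul ((hl.const_mul (1 - s)).exp)).aestronglyMeasurable)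
    (intNeg1 hl hA (1 - t) (by linarith))
    (((hl.pow_const 2).mul ((hl.const_mul (1 - t)).exp)).aestronglyMeasurable)
    ?_ ?_ ?_
  · exact key.2
  · refine ae_of_all _ fun x s hs => ?_
    rw [Metric.mem_ball, Real.dist_eq, abs_lt] at hs
    rw [norm_mul, Real.norm_eq_abs, Real.norm_eq_abs, abs_of_nonneg (sq_nonneg _),
      abs_of_pos (Real.exp_pos _)]
    exact mul_le_mul_of_nonneg_left
      (exp_interval_bound (ℓ x) (t/2) (3*t/2) s (by linarith [hs.1]) (by linarith [hs.2]))
      (sq_nonneg _)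
  · refine ((intAbs2 hl hA (1 - t/2) (by linarith)).add
      (intAbs2 hl hA (1 - 3*t/2) (by linarith))).congr
      (ae_of_all _ fun x => by simp only [Pi.add_apply]; rw [mul_add])
  · refine ae_of_all _ fun x s hs => ?_
    have h1 : HasDerivAt (fun s : ℝ => (1 - s) * ℓ x) (-ℓ x) s := by
      have := ((hasDerivAt_id s).const_sub (1:ℝ)).mul_const (ℓ x)
      refine this.congr_deriv ?_; ring
    have := (h1.exp).const_mul (-ℓ x)
    refine this.congr_deriv ?_; ring

omit hl hA in
lemma LF_one [IsProbabilityMeasure ν] : LF ν ℓ 1 = 1 := by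
  simp [LF, measure_univ]

omit hl hA in
lemma LD1_one : LD1 ν ℓ 1 = -∫ x, ℓ x ∂ν := by
  rw [LD1, ← integral_neg]
  congr 1; funext x; simp

omit hl in
lemma LF_pos [IsProbabilityMeasure ν] (t : ℝ) (ht : 0 < t) : 0 < LF ν ℓ t := by
  rcases lt_or_eq_of_le (integral_nonneg (fun x => (Real.exp_pos _).le) :
    (0:ℝ) ≤ LF ν ℓ t) with h | h
  · exact h
  · exfalso
    have hint : Integrable (fun x => Real.exp ((1 - t) * ℓ x)) ν := hA _ (by linarith)
    have h0 := (integral_eq_zero_iff_of_nonneg (fun x => (Real.exp_pos _).le) hint).mp h.symm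
    have h2 : ∀ᵐ x ∂ν, False := by
      filter_upwards [h0] with x hx
      exact (Real.exp_pos ((1 - t) * ℓ x)).ne' (by simpa using hx)
    have h4 : ν = 0 := by simpa using ae_iff.mp h2
    have h5 := measure_univ (μ := ν)
    rw [h4] at h5
    simp at h5
end
end AbstractMGF
section AbstractMGF2
open MeasureTheory Filter Topology Real Set
variable {α : Type*} [MeasurableSpace α] (ν : Measure α) (ℓ : α → ℝ)

def GA2 (s : ℝ) : ℝ := 2 * LD1 ν ℓ s + s * LD2 ν ℓ s
def GB2 (q s : ℝ) : ℝ :=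
  Real.exp (q * (1 - s)) * (q ^ 2 * LF ν ℓ s - 2 * q * LD1 ν ℓ s + LD2 ν ℓ s)

variable {ν ℓ}
variable (hl : Measurable ℓ)
  (hA : ∀ c : ℝ, c < 1 → Integrable (fun x => Real.exp (c * ℓ x)) ν)

section
include hl hA

lemma gA_d1 : ∀ s ∈ Ioi (0:ℝ), HasDerivAt (fun u => u * LF ν ℓ u)
    (LF ν ℓ s + s * LD1 ν ℓ s) s := by
  intro s hs
  have := (hasDerivAt_id s).mul (LF_hasDeriv hl hA s hs)
  refine this.congr_deriv ?_
  try simp only [id_eq]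
  ring

lemma gA_d2 : ∀ s ∈ Ioi (0:ℝ), HasDerivAt (fun u => LF ν ℓ u + u * LD1 ν ℓ u)
    (GA2 ν ℓ s) s := by
  intro s hs
  have := (LF_hasDeriv hl hA s hs).add ((hasDerivAt_id s).mul (LD1_hasDeriv hl hA s hs))
  refine this.congr_deriv ?_
  simp only [id_eq, GA2]
  ring

lemma iterA (φ : ℝ → ℝ) (hφ : ∀ u ∈ Ioi (0:ℝ), φ u = LF ν ℓ u) (s : ℝ) (hs : 0 < s) :
    iteratedDeriv 2 (fun u => u * φ u) s = GA2 ν ℓ s := by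
  have hev : (fun u => u * φ u) =ᶠ[𝓝 s] (fun u => u * LF ν ℓ u) := by
    filter_upwards [Ioi_mem_nhds hs] with u hu
    rw [hφ u hu]
  have h2 : iteratedDeriv 2 (fun u => u * φ u) s = deriv (deriv (fun u => u * φ u)) s := by
    rw [iteratedDeriv_succ, iteratedDeriv_one]
  rw [h2]
  have hd1ev : deriv (fun u => u * φ u) =ᶠ[𝓝 s] (fun u => LF ν ℓ u + u * LD1 ν ℓ u) := by
    refine hev.deriv.trans ?_
    filter_upwards [Ioi_mem_nhds hs] with u hu
    exact (gA_d1 hl hA u hu).deriv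
  rw [hd1ev.deriv_eq]
  exact (gA_d2 hl hA s hs).deriv

omit hl hA in
lemma gB_dEQ (q : ℝ) : ∀ s : ℝ, HasDerivAt (fun u => Real.exp (q * (1 - u)))
    (-q * Real.exp (q * (1 - s))) s := by
  intro s
  have := (((hasDerivAt_id s).const_sub (1:ℝ)).const_mul q).exp
  refine this.congr_deriv ?_
  try simp only [id_eq]
  ring

lemma gB_d1 (q : ℝ) : ∀ s ∈ Ioi (0:ℝ),
    HasDerivAt (fun u => Real.exp (q * (1 - u)) * LF ν ℓ u)
    (Real.exp (q * (1 - s)) * (LD1 ν ℓ s - q * LF ν ℓ s)) s := by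
  intro s hs
  have := (gB_dEQ q s).mul (LF_hasDeriv hl hA s hs)
  refine this.congr_deriv ?_
  try simp only [id_eq]
  ring

lemma gB_d2 (q : ℝ) : ∀ s ∈ Ioi (0:ℝ),
    HasDerivAt (fun u => Real.exp (q * (1 - u)) * (LD1 ν ℓ u - q * LF ν ℓ u))
    (GB2 ν ℓ q s) s := by
  intro s hs
  have := (gB_dEQ q s).mul
    ((LD1_hasDeriv hl hA s hs).sub ((LF_hasDeriv hl hA s hs).const_mul q))
  refine this.congr_deriv ?_
  simp only [id_eq, GB2, Pi.sub_apply]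
  ring

lemma iterB {Q : ℝ} (hQ : 0 < Q) (φ : ℝ → ℝ) (hφ : ∀ u ∈ Ioi (0:ℝ), φ u = LF ν ℓ u)
    (s : ℝ) (hs : 0 < s) :
    iteratedDeriv 2 (fun u => Q ^ (1 - u) * φ u) s = GB2 ν ℓ (Real.log Q) s := by
  set q := Real.log Q with hq
  have hfun : (fun u : ℝ => Q ^ (1 - u) * φ u) = (fun u => Real.exp (q * (1 - u)) * φ u) := by
    funext u
    rw [Real.rpow_def_of_pos hQ]
  rw [hfun]
  have hev : (fun u => Real.exp (q * (1 - u)) * φ u)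
      =ᶠ[𝓝 s] (fun u => Real.exp (q * (1 - u)) * LF ν ℓ u) := by
    filter_upwards [Ioi_mem_nhds hs] with u hu
    rw [hφ u hu]
  have h2 : iteratedDeriv 2 (fun u => Real.exp (q * (1 - u)) * φ u)
      = deriv (deriv (fun u => Real.exp (q * (1 - u)) * φ u)) := by
    rw [iteratedDeriv_succ, iteratedDeriv_one]
  rw [h2]
  have hd1ev : deriv (fun u => Real.exp (q * (1 - u)) * φ u)
      =ᶠ[𝓝 s] (fun u => Real.exp (q * (1 - u)) * (LD1 ν ℓ u - q * LF ν ℓ u)) := by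
    refine hev.deriv.trans ?_
    filter_upwards [Ioi_mem_nhds hs] with u hu
    exact (gB_d1 hl hA q u hu).deriv
  rw [hd1ev.deriv_eq]
  exact (gB_d2 hl hA q s hs).deriv

lemma single_letter [IsProbabilityMeasure ν] {Q K : ℝ} (hQ : 0 < Q)
    (hKA : ∀ s ∈ Ioc (0:ℝ) 1, s ^ 2 * GA2 ν ℓ s ≤ K)
    (hKB : ∀ s ∈ Ioi (1:ℝ), s ^ 2 * GB2 ν ℓ (Real.log Q) s ≤ K)
    (μ : ℝ) (hμ : μ < 1) :
    Real.exp (-μ * (∫ x, ℓ x ∂ν)) * LF ν ℓ (1 - μ)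
      ≤ Real.exp ((K + 1) * (-μ - Real.log (1 - μ))) := by
  set hh : ℝ := ∫ x, ℓ x ∂ν with hhdef
  set t : ℝ := 1 - μ with htdef
  have htpos : 0 < t := by simp only [htdef]; linarith
  have hLt : 0 < LF ν ℓ t := LF_pos hA t htpos
  have hrt : Real.log t ≤ t - 1 := by
    have := Real.log_le_sub_one_of_pos htpos; linarith
  have hμt : -μ = t - 1 := by simp only [htdef]; ring
  -- reduce to a log inequality
  have main : Real.log (LF ν ℓ t) + (t - 1) * hh ≤ (K + 1) * (t - 1 - Real.log t) := by
    rcases le_or_gt t 1 with hcase | hcase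
    · -- branch A
      have key := taylor_bound_left (fun u => u * LF ν ℓ u)
        (fun u => LF ν ℓ u + u * LD1 ν ℓ u) (GA2 ν ℓ) K
        (gA_d1 hl hA) (gA_d2 hl hA)
        (fun s hs => by
          have h2 : (0:ℝ) < s ^ 2 := pow_pos hs.1 2
          rw [le_div_iff₀ h2]
          linarith [hKA s hs])
        t htpos hcase
      simp only [LF_one (ν := ν) (ℓ := ℓ), LD1_one (ν := ν) (ℓ := ℓ), one_mul, mul_one] at key
      rw [← hhdef] at key
      have hlog1 : Real.log (t * LF ν ℓ t) ≤ t * LF ν ℓ t - 1 :=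
        Real.log_le_sub_one_of_pos (mul_pos htpos hLt)
      have hlog2 : Real.log (t * LF ν ℓ t) = Real.log t + Real.log (LF ν ℓ t) :=
        Real.log_mul (ne_of_gt htpos) (ne_of_gt hLt)
      nlinarith [key, hlog1, hlog2]
    · -- branch B
      set q := Real.log Q with hq
      have key := taylor_bound_right (fun u => Real.exp (q * (1 - u)) * LF ν ℓ u)
        (fun u => Real.exp (q * (1 - u)) * (LD1 ν ℓ u - q * LF ν ℓ u)) (GB2 ν ℓ q) K
        (gB_d1 hl hA q) (gB_d2 hl hA q)
        (fun s hs => by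
          have h2 : (0:ℝ) < s ^ 2 := pow_pos (lt_trans one_pos hs) 2
          rw [le_div_iff₀ h2]
          linarith [hKB s hs])
        t hcase.le
      simp only [LF_one (ν := ν) (ℓ := ℓ), LD1_one (ν := ν) (ℓ := ℓ), sub_self, mul_zero,
        Real.exp_zero, one_mul, mul_one] at key
      rw [← hhdef] at key
      have hgpos : 0 < Real.exp (q * (1 - t)) * LF ν ℓ t := mul_pos (Real.exp_pos _) hLt
      have hlog1 : Real.log (Real.exp (q * (1 - t)) * LF ν ℓ t)
          ≤ Real.exp (q * (1 - t)) * LF ν ℓ t - 1 := Real.log_le_sub_one_of_pos hgpos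
      have hlog2 : Real.log (Real.exp (q * (1 - t)) * LF ν ℓ t)
          = q * (1 - t) + Real.log (LF ν ℓ t) := by
        rw [Real.log_mul (ne_of_gt (Real.exp_pos _)) (ne_of_gt hLt), Real.log_exp]
      nlinarith [key, hlog1, hlog2]
  -- conclude
  have : Real.exp (-μ * hh) * LF ν ℓ t = Real.exp (-μ * hh + Real.log (LF ν ℓ t)) := by
    rw [Real.exp_add, Real.exp_log hLt]
  rw [this, Real.exp_le_exp]
  have h1 : -μ - Real.log (1 - μ) = t - 1 - Real.log t := by rw [← htdef, hμt]
  rw [h1, hμt]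
  linarith [main]

lemma single_letter_lintegral [IsProbabilityMeasure ν] {Q K : ℝ} (hQ : 0 < Q)
    (hKA : ∀ s ∈ Ioc (0:ℝ) 1, s ^ 2 * GA2 ν ℓ s ≤ K)
    (hKB : ∀ s ∈ Ioi (1:ℝ), s ^ 2 * GB2 ν ℓ (Real.log Q) s ≤ K)
    (μ : ℝ) (hμ : μ < 1) :
    ∫⁻ x, ENNReal.ofReal (Real.exp (μ * (ℓ x - ∫ x', ℓ x' ∂ν))) ∂ν
      ≤ ENNReal.ofReal (Real.exp ((K + 1) * (-μ - Real.log (1 - μ)))) := by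
  set hh : ℝ := ∫ x, ℓ x ∂ν with hhdef
  have step1 : ∀ x, ENNReal.ofReal (Real.exp (μ * (ℓ x - hh)))
      = ENNReal.ofReal (Real.exp (-μ * hh)) * ENNReal.ofReal (Real.exp (μ * ℓ x)) := by
    intro x
    rw [← ENNReal.ofReal_mul (Real.exp_pos _).le, ← Real.exp_add]
    congr 2; ring
  calc ∫⁻ x, ENNReal.ofReal (Real.exp (μ * (ℓ x - hh))) ∂ν
      = ∫⁻ x, ENNReal.ofReal (Real.exp (-μ * hh)) * ENNReal.ofReal (Real.exp (μ * ℓ x)) ∂ν := by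
        exact lintegral_congr fun x => step1 x
    _ = ENNReal.ofReal (Real.exp (-μ * hh)) * ∫⁻ x, ENNReal.ofReal (Real.exp (μ * ℓ x)) ∂ν :=
        lintegral_const_mul _ ((hl.const_mul μ).exp.ennreal_ofReal)
    _ = ENNReal.ofReal (Real.exp (-μ * hh)) * ENNReal.ofReal (LF ν ℓ (1 - μ)) := by
        congr 1
        rw [← ofReal_integral_eq_lintegral_ofReal (hA μ hμ)
          (ae_of_all _ fun x => (Real.exp_pos _).le)]
        congr 1
        rw [LF, sub_sub_cancel]
    _ = ENNReal.ofReal (Real.exp (-μ * hh) * LF ν ℓ (1 - μ)) := by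
        rw [ENNReal.ofReal_mul (Real.exp_pos _).le]
    _ ≤ ENNReal.ofReal (Real.exp ((K + 1) * (-μ - Real.log (1 - μ)))) :=
        ENNReal.ofReal_le_ofReal (single_letter hl hA hQ hKA hKB μ hμ)

end
end AbstractMGF2
section PiLemmas
open MeasureTheory Filter Topology Set
open scoped ENNReal
variable {α : Type*} [MeasurableSpace α] (ν : Measure α) [IsProbabilityMeasure ν]

lemma pi_map_eval {n : ℕ} (i : Fin n) :
    (Measure.pi fun _ : Fin n => ν).map (fun ω : Fin n → α => ω i) = ν := by
  ext s hs
  rw [Measure.map_apply (measurable_pi_apply i) hs]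
  have hset : (fun ω : Fin n → α => ω i) ⁻¹' s
      = Set.pi Set.univ (Function.update (fun _ : Fin n => (Set.univ : Set α)) i s) := by
    ext ω
    simp only [Set.mem_preimage, Set.mem_pi, Set.mem_univ, forall_true_left]
    constructor
    · intro hω j
      rcases eq_or_ne j i with rfl | hj
      · rwa [Function.update_self]
      · rw [Function.update_of_ne hj]; exact Set.mem_univ _
    · intro hω
      have := hω i
      rwa [Function.update_self] at this
  rw [hset, Measure.pi_pi]
  rw [Finset.prod_eq_single i
    (fun j _ hj => by rw [Function.update_of_ne hj]; exact measure_univ)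
    (fun h => absurd (Finset.mem_univ i) h)]
  rw [Function.update_self]

lemma lintegral_pi_prod {n : ℕ} (g : α → ℝ≥0∞) (hg : Measurable g) :
    ∫⁻ ω : Fin n → α, ∏ i, g (ω i) ∂(Measure.pi fun _ : Fin n => ν)
      = (∫⁻ x, g x ∂ν) ^ n := by
  induction n with
  | zero => simp
  | succ n ih =>
    have hmp := (measurePreserving_piFinSuccAbove (fun _ : Fin (n + 1) => ν) 0).symm
    rw [← hmp.map_eq, lintegral_map_equiv]
    have heq : ∀ z : α × (Fin n → α),
        (∏ i, g ((MeasurableEquiv.piFinSuccAbove (fun _ : Fin (n+1) => α) 0).symm z i))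
        = g z.1 * ∏ j : Fin n, g (z.2 j) := by
      rintro ⟨x, y⟩
      simp only [MeasurableEquiv.piFinSuccAbove_symm_apply, Fin.insertNthEquiv,
        Equiv.coe_fn_mk, Fin.insertNth_zero]
      rw [Fin.prod_univ_succ]
      simp [Fin.cons_zero, Fin.cons_succ]
    calc ∫⁻ z, (∏ i, g ((MeasurableEquiv.piFinSuccAbove (fun _ : Fin (n+1) => α) 0).symm z i))
          ∂(ν.prod (Measure.pi fun _ : Fin n => ν))
        = ∫⁻ z, g z.1 * ∏ j : Fin n, g (z.2 j) ∂(ν.prod (Measure.pi fun _ : Fin n => ν)) := by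
          exact lintegral_congr heq
      _ = (∫⁻ x, g x ∂ν) * ∫⁻ y, ∏ j : Fin n, g (y j) ∂(Measure.pi fun _ : Fin n => ν) := by
          exact lintegral_prod_mul hg.aemeasurable
            (Finset.measurable_prod Finset.univ
              (fun j _ => hg.comp (measurable_pi_apply j))).aemeasurable
      _ = (∫⁻ x, g x ∂ν) ^ (n + 1) := by rw [ih, pow_succ, mul_comm]

lemma integral_pi_sum {n : ℕ} (ℓ : α → ℝ) (hint : Integrable ℓ ν) :
    ∫ ω : Fin n → α, (∑ i, ℓ (ω i)) ∂(Measure.pi fun _ : Fin n => ν)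
      = n * ∫ x, ℓ x ∂ν := by
  have h1 : ∀ i : Fin n, AEStronglyMeasurable ℓ
      ((Measure.pi fun _ : Fin n => ν).map (fun ω : Fin n → α => ω i)) := by
    intro i; rw [pi_map_eval]; exact hint.aestronglyMeasurable
  have hcoord : ∀ i : Fin n,
      Integrable (fun ω : Fin n → α => ℓ (ω i)) (Measure.pi fun _ : Fin n => ν) := by
    intro i
    have := (integrable_map_measure (h1 i) (measurable_pi_apply i).aemeasurable).mp
      (by rw [pi_map_eval]; exact hint)
    exact this
  rw [integral_finset_sum Finset.univ (fun i _ => hcoord i)]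
  have hval : ∀ i : Fin n,
      ∫ ω : Fin n → α, ℓ (ω i) ∂(Measure.pi fun _ : Fin n => ν) = ∫ x, ℓ x ∂ν := by
    intro i
    have := integral_map (μ := Measure.pi fun _ : Fin n => ν)
      (measurable_pi_apply i).aemeasurable (h1 i)
    rw [pi_map_eval] at this
    exact this.symm
  rw [Finset.sum_congr rfl (fun i _ => hval i), Finset.sum_const, Finset.card_univ,
    Fintype.card_fin, nsmul_eq_mul]

end PiLemmas
section Concrete
open MeasureTheory Filter Topology Real Set CondInfo
open scoped ENNReal

variable {k : ℕ} {f : ((Fin (2 * k) → ℝ) × ℝ) → ℝ}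

lemma margX_meas (hmeas : Measurable f) : Measurable (margX f) :=
  (hmeas.stronglyMeasurable.integral_prod_right').measurable

lemma condD_meas (hmeas : Measurable f) : Measurable (condD f) :=
  hmeas.div ((margX_meas hmeas).comp measurable_fst)

lemma ell_meas (hmeas : Measurable f) :
    Measurable (fun p => -Real.log (condD f p)) :=
  (Real.measurable_log.comp (condD_meas hmeas)).neg

lemma key_lint (hmeas : Measurable f) (hpos : ∀ p, 0 ≤ f p)
    (hint : ∫⁻ p, ENNReal.ofReal (f p) = 1)
    (t : ℝ) (ht : 0 < t) :
    ∫⁻ p, ENNReal.ofReal (condD f p ^ t * margX f p.1)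
      = ∫⁻ p, ENNReal.ofReal (Real.exp ((1 - t) * (-Real.log (condD f p))))
          ∂(volume.withDensity fun p => ENNReal.ofReal (f p)) := by
  rw [lintegral_withDensity_eq_lintegral_mul volume hmeas.ennreal_ofReal
    (((ell_meas hmeas).const_mul (1 - t)).exp.ennreal_ofReal)]
  simp only [Pi.mul_apply]
  have hmarg : ∀ x, margX f x = (∫⁻ y, ENNReal.ofReal (f (x, y))).toReal := by
    intro x
    rw [margX, integral_eq_lintegral_of_nonneg_ae (ae_of_all _ fun y => hpos (x, y))
      ((hmeas.comp measurable_prodMk_left).aestronglyMeasurable)]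
  have hNmeas : MeasurableSet {p : (Fin (2 * k) → ℝ) × ℝ | f p ≠ 0 ∧ margX f p.1 ≤ 0} := by
    refine MeasurableSet.inter ?_ ?_
    · exact (hmeas (measurableSet_singleton 0)).compl
    · exact ((margX_meas hmeas).comp measurable_fst) measurableSet_Iic
  have hN : (volume : Measure ((Fin (2 * k) → ℝ) × ℝ))
      {p | f p ≠ 0 ∧ margX f p.1 ≤ 0} = 0 := by
    rw [Measure.volume_eq_prod, Measure.prod_apply hNmeas]
    have hslice : ∀ᵐ x ∂(volume : Measure (Fin (2 * k) → ℝ)),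
        (∫⁻ y, ENNReal.ofReal (f (x, y))) ≠ ⊤ := by
      have htonelli : ∫⁻ x, ∫⁻ y, ENNReal.ofReal (f (x, y)) = 1 := by
        rw [← lintegral_prod _ hmeas.ennreal_ofReal.aemeasurable, ← Measure.volume_eq_prod]
        exact hint
      have hFmeas : Measurable fun x => ∫⁻ y, ENNReal.ofReal (f (x, y)) :=
        hmeas.ennreal_ofReal.lintegral_prod_right'
      exact (ae_lt_top hFmeas (by rw [htonelli]; exact ENNReal.one_ne_top)).mono fun x hx => hx.ne
    have hzero : ∀ᵐ x ∂(volume : Measure (Fin (2 * k) → ℝ)),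
        (volume : Measure ℝ)
          (Prod.mk x ⁻¹' {p : (Fin (2 * k) → ℝ) × ℝ | f p ≠ 0 ∧ margX f p.1 ≤ 0}) = 0 := by
      filter_upwards [hslice] with x htop
      rcases lt_or_ge 0 (margX f x) with hm | hm
      · convert measure_empty (μ := (volume : Measure ℝ))
        ext y
        simp only [Set.mem_preimage, Set.mem_setOf_eq, Set.mem_empty_iff_false, iff_false,
          not_and, not_le]
        intro _; exact hm
      · have h0 : (∫⁻ y, ENNReal.ofReal (f (x, y))) = 0 := by
          have h2 : (∫⁻ y, ENNReal.ofReal (f (x, y))).toReal = 0 :=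
            le_antisymm ((hmarg x) ▸ hm) ENNReal.toReal_nonneg
          rcases (ENNReal.toReal_eq_zero_iff _).mp h2 with h | h
          · exact h
          · exact absurd h htop
        have hae := (lintegral_eq_zero_iff
          ((hmeas.comp measurable_prodMk_left).ennreal_ofReal)).mp h0
        have hae2 : ∀ᵐ y ∂(volume : Measure ℝ), f (x, y) = 0 := by
          filter_upwards [hae] with y hy
          simp only [Pi.zero_apply, ENNReal.ofReal_eq_zero] at hy
          exact le_antisymm hy (hpos _)
        refine measure_mono_null (fun y hy => ?_) (ae_iff.mp hae2)
        exact hy.1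
    rw [lintegral_congr_ae hzero, lintegral_zero]
  have haeN : ∀ᵐ p ∂(volume : Measure ((Fin (2 * k) → ℝ) × ℝ)),
      ¬(f p ≠ 0 ∧ margX f p.1 ≤ 0) := by
    rw [ae_iff]
    simpa using hN
  apply lintegral_congr_ae
  filter_upwards [haeN] with p hp
  rcases eq_or_ne (f p) 0 with h0 | h0
  · rw [condD, h0, zero_div, Real.zero_rpow (ne_of_gt ht), zero_mul]
    simp
  · have hm : 0 < margX f p.1 := by
      by_contra hcon
      push_neg at hcon
      exact hp ⟨h0, hcon⟩
    have hfp : 0 < f p := lt_of_le_of_ne (hpos p) (Ne.symm h0)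
    have hc : 0 < condD f p := div_pos hfp hm
    have hexp : Real.exp ((1 - t) * (-Real.log (condD f p))) = condD f p ^ (t - 1) := by
      rw [Real.rpow_def_of_pos hc]
      congr 1; ring
    rw [hexp, ← ENNReal.ofReal_mul (hpos p)]
    congr 1
    have hpow : condD f p ^ t = condD f p ^ (t - 1) * condD f p := by
      nth_rewrite 1 [show t = (t - 1) + 1 by ring]
      rw [Real.rpow_add_one (ne_of_gt hc)]
    have e1 : condD f p * margX f p.1 = f p := by
      rw [condD, div_mul_cancel₀ _ (ne_of_gt hm)]
    rw [hpow, mul_assoc, e1, mul_comm]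
end Concrete

open MeasureTheory Filter Topology Real Set in
/-- **Exponential moment bound, i.i.d. product version** (Corollary 1). -/
theorem exp_moment_conditional_information_iid
    (k n : ℕ) (f : ((Fin (2 * k) → ℝ) × ℝ) → ℝ)
    (hmeas : Measurable f) (hpos : ∀ p, 0 ≤ f p)
    (hint : ∫⁻ p, ENNReal.ofReal (f p) = 1)
    -- `L(t) < ∞` for all `t > 0`
    (hL : ∀ t : ℝ, 0 < t → ∫⁻ p, ENNReal.ofReal (condD f p ^ t * margX f p.1) < ⊤)
    (Q : ℝ) (hQ : 0 < Q)
    -- `K₁ < ∞`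
    (hK : BddAbove (K1setA f) ∧ BddAbove (K1setB f Q)) :
    ∀ μ : ℝ,
      ∫⁻ ω : Fin n → ((Fin (2 * k) → ℝ) × ℝ),
          ENNReal.ofReal (Real.exp (μ * ((∑ i, -Real.log (condD f (ω i))) -
            (∫ ω' : Fin n → ((Fin (2 * k) → ℝ) × ℝ),
                (∑ i, -Real.log (condD f (ω' i)))
              ∂(Measure.pi fun _ => volume.withDensity fun p => ENNReal.ofReal (f p))))))
          ∂(Measure.pi fun _ => volume.withDensity fun p => ENNReal.ofReal (f p))
        ≤ expRate ((n : ℝ) * (K1 f Q + 1)) (rfun (-μ)) := by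
  intro μ
  set ν : Measure ((Fin (2 * k) → ℝ) × ℝ) :=
    volume.withDensity fun p => ENNReal.ofReal (f p) with hν
  haveI hprob : IsProbabilityMeasure ν := by
    constructor
    rw [hν, withDensity_apply _ MeasurableSet.univ, Measure.restrict_univ]
    exact hint
  rcases lt_or_ge μ 1 with hμ | hμ
  swap
  · have h1 : rfun (-μ) = ⊤ := by
      rw [rfun, if_neg (not_lt.mpr (by linarith))]
    rw [h1, expRate, if_pos rfl]
    exact le_top
  have hl : Measurable (fun p => -Real.log (condD f p)) := ell_meas hmeas
  have hA : ∀ c : ℝ, c < 1 →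
      Integrable (fun x => Real.exp (c * (-Real.log (condD f x)))) ν := by
    intro c hc
    refine ⟨((hl.const_mul c).exp).aestronglyMeasurable, ?_⟩
    rw [hasFiniteIntegral_iff_ofReal (ae_of_all _ fun x => (Real.exp_pos _).le)]
    have hk := key_lint hmeas hpos hint (1 - c) (by linarith)
    rw [← hν] at hk
    rw [show (1:ℝ) - (1 - c) = c from by ring] at hk
    rw [← hk]
    exact hL (1 - c) (by linarith)
  have hLmomEq : ∀ u ∈ Ioi (0:ℝ), Lmom f u = LF ν (fun p => -Real.log (condD f p)) u := by
    intro u hu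
    rw [mem_Ioi] at hu
    have hk := key_lint hmeas hpos hint u hu
    rw [← hν] at hk
    rw [Lmom, hk,
      ← ofReal_integral_eq_lintegral_ofReal (hA (1 - u) (by linarith))
        (ae_of_all _ fun x => (Real.exp_pos _).le),
      ENNReal.toReal_ofReal (integral_nonneg fun x => (Real.exp_pos _).le)]
    rfl
  have hKA : ∀ s ∈ Ioc (0:ℝ) 1,
      s ^ 2 * GA2 ν (fun p => -Real.log (condD f p)) s ≤ K1 f Q := by
    intro s hs
    have hiter := iterA hl hA (Lmom f) hLmomEq s hs.1
    have hmem : s ^ 2 * iteratedDeriv 2 (fun u => u * Lmom f u) s ∈ K1setA f := ⟨s, hs, rfl⟩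
    have hsup := le_csSup hK.1 hmem
    rw [hiter] at hsup
    refine hsup.trans ?_
    rw [K1]
    exact le_max_left _ _
  have hKB : ∀ s ∈ Ioi (1:ℝ),
      s ^ 2 * GB2 ν (fun p => -Real.log (condD f p)) (Real.log Q) s ≤ K1 f Q := by
    intro s hs
    have hiter := iterB hl hA hQ (Lmom f) hLmomEq s (lt_trans one_pos hs)
    have hmem : s ^ 2 * iteratedDeriv 2 (fun u => Q ^ (1 - u) * Lmom f u) s ∈ K1setB f Q :=
      ⟨s, hs, rfl⟩
    have hsup := le_csSup hK.2 hmem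
    rw [hiter] at hsup
    refine hsup.trans ?_
    rw [K1]
    exact le_max_right _ _
  have hIntl : Integrable (fun p => -Real.log (condD f p)) ν := by
    have i2 : Integrable (fun x => Real.exp (-((1/2 : ℝ) * (-Real.log (condD f x))))) ν :=
      (hA (-(1/2)) (by norm_num)).congr (ae_of_all _ fun x => by simp only [neg_mul])
    have hbint : Integrable (fun x => ((1:ℝ)/2)⁻¹ *
        (Real.exp ((1/2 : ℝ) * (-Real.log (condD f x)))
          + Real.exp (-((1/2 : ℝ) * (-Real.log (condD f x)))))) ν :=
      ((hA (1/2) (by norm_num)).add i2).const_mul _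
    refine hbint.mono hl.aestronglyMeasurable (ae_of_all _ fun x => ?_)
    rw [Real.norm_eq_abs, Real.norm_eq_abs]
    exact (abs_le_exp_aux (1/2) (-Real.log (condD f x)) (by norm_num)).trans (le_abs_self _)
  have hsum : (∫ ω' : Fin n → ((Fin (2 * k) → ℝ) × ℝ),
      (∑ i, -Real.log (condD f (ω' i))) ∂(Measure.pi fun _ => ν))
      = n * ∫ x, -Real.log (condD f x) ∂ν := integral_pi_sum ν _ hIntl
  rw [hsum]
  have hprodform : ∀ ω : Fin n → ((Fin (2 * k) → ℝ) × ℝ),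
      ENNReal.ofReal (Real.exp (μ * ((∑ i, -Real.log (condD f (ω i)))
          - n * ∫ x, -Real.log (condD f x) ∂ν)))
        = ∏ i, ENNReal.ofReal (Real.exp (μ * (-Real.log (condD f (ω i))
          - ∫ x, -Real.log (condD f x) ∂ν))) := by
    intro ω
    have hexpand : ∑ i : Fin n, μ * (-Real.log (condD f (ω i))
        - ∫ x, -Real.log (condD f x) ∂ν)
        = μ * ((∑ i, -Real.log (condD f (ω i))) - n * ∫ x, -Real.log (condD f x) ∂ν) := by
      rw [← Finset.mul_sum]
      congr 1
      rw [Finset.sum_sub_distrib, Finset.sum_const, Finset.card_univ, Fintype.card_fin,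
        nsmul_eq_mul]
    rw [← ENNReal.ofReal_prod_of_nonneg (fun i _ => (Real.exp_pos _).le), ← Real.exp_sum,
      hexpand]
  rw [lintegral_congr hprodform]
  have Mmeas : Measurable fun x : (Fin (2 * k) → ℝ) × ℝ =>
      ENNReal.ofReal (Real.exp (μ * (-Real.log (condD f x)
        - ∫ x', -Real.log (condD f x') ∂ν))) :=
    (((hl.sub measurable_const).const_mul μ).exp).ennreal_ofReal
  have hpp : ∫⁻ ω : Fin n → ((Fin (2 * k) → ℝ) × ℝ),
      (∏ i, ENNReal.ofReal (Real.exp (μ * (-Real.log (condD f (ω i))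
        - ∫ x, -Real.log (condD f x) ∂ν)))) ∂(Measure.pi fun _ => ν)
      = (∫⁻ x, ENNReal.ofReal (Real.exp (μ * (-Real.log (condD f x)
        - ∫ x', -Real.log (condD f x') ∂ν))) ∂ν) ^ n := lintegral_pi_prod ν _ Mmeas
  rw [hpp]
  have hM : (∫⁻ x, ENNReal.ofReal (Real.exp (μ * (-Real.log (condD f x)
      - ∫ x', -Real.log (condD f x') ∂ν))) ∂ν)
      ≤ ENNReal.ofReal (Real.exp ((K1 f Q + 1) * (-μ - Real.log (1 - μ)))) :=
    single_letter_lintegral hl hA hQ hKA hKB μ hμ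
  have hr0 : 0 ≤ -μ - Real.log (1 - μ) := by
    have := Real.log_le_sub_one_of_pos (show (0:ℝ) < 1 - μ by linarith)
    linarith
  have hrfun : rfun (-μ) = ENNReal.ofReal (-μ - Real.log (1 - μ)) := by
    rw [rfun, if_pos (show (-1:ℝ) < -μ by linarith),
      show (1:ℝ) + -μ = 1 - μ from by ring]
  have hrate : expRate ((n : ℝ) * (K1 f Q + 1)) (rfun (-μ))
      = ENNReal.ofReal (Real.exp ((n : ℝ) * (K1 f Q + 1) * (-μ - Real.log (1 - μ)))) := by
    rw [hrfun, expRate, if_neg ENNReal.ofReal_ne_top, ENNReal.toReal_ofReal hr0]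
  rw [hrate]
  refine le_trans (pow_le_pow_left₀ zero_le hM n) (le_of_eq ?_)
  rw [← ENNReal.ofReal_pow (Real.exp_pos _).le, ← Real.exp_nat_mul, mul_assoc]
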